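/- Suppose r+1 is prime and k is a positive integer not divisible by r+1 such that (r+1)^α · k is a Schemmel nontotient number of order r for all nonnegative integers α. If k₁ and k₂ are relatively prime positive integers with k₁k₂ = k, then either (r+1)^α · k₁ is a Schemmel nontotient of order r for all nonnegative α, or (r+1)^α · k₂ is a Schemmel nontotient of order r for all nonnegative α. -/
import Mathlib

/-- The `r`-th Schemmel totient function: multiplicative, with
`S_r(p^a) = 0` if `p ≤ r` and `S_r(p^a) = p^(a-1) * (p - r)` if `p > r`. -/
def schemmel (r n : ℕ) : ℕ :=
  n.factorization.prod (fun p a => if p ≤ r then 0 else p ^ (a - 1) * (p - r))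

lemma schemmel_one (r : ℕ) : schemmel r 1 = 1 := by simp [schemmel]

lemma schemmel_mul (r : ℕ) {m n : ℕ} (hm : m ≠ 0) (hn : n ≠ 0) (h : Nat.Coprime m n) :
    schemmel r (m * n) = schemmel r m * schemmel r n := by
  unfold schemmel
  rw [Nat.factorization_mul hm hn, Finsupp.prod_add_index_of_disjoint]
  rw [Nat.support_factorization, Nat.support_factorization]
  exact Nat.Coprime.disjoint_primeFactors h

lemma schemmel_prime_pow (r : ℕ) {p : ℕ} (hp : p.Prime) {a : ℕ} (ha : a ≠ 0) :
    schemmel r (p ^ a) = if p ≤ r then 0 else p ^ (a - 1) * (p - r) := by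
  unfold schemmel
  rw [hp.factorization_pow, Finsupp.prod, Finsupp.support_single_ne_zero _ ha]
  simp

lemma schemmel_ord (r : ℕ) {p : ℕ} (hp : p.Prime) {y : ℕ} (hy : y ≠ 0) :
    schemmel r y = schemmel r (p ^ y.factorization p) * schemmel r (ordCompl[p] y) := by
  conv_lhs => rw [← Nat.ordProj_mul_ordCompl_eq_self y p]
  exact schemmel_mul r (pow_ne_zero _ hp.pos.ne') (Nat.ordCompl_pos p hy).ne'
    ((Nat.coprime_ordCompl hp hy).pow_left _)

/-- cancel a prime power -/
lemma schemmel_cancel {p k e γ s : ℕ} (hp : p.Prime) (hnd : ¬ p ∣ k)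
    (h : p ^ e * s = p ^ γ * k) : s = p ^ (γ - e) * k := by
  have he : e ≤ γ := by
    have h1 : p ^ e ∣ p ^ γ * k := ⟨s, h.symm⟩
    have h2 : Nat.Coprime (p ^ e) k :=
      Nat.Coprime.pow_left e ((Nat.Prime.coprime_iff_not_dvd hp).mpr hnd)
    have h3 : p ^ e ∣ p ^ γ := h2.dvd_of_dvd_mul_right h1
    exact (Nat.pow_dvd_pow_iff_le_right hp.one_lt).mp h3
  have h4 : p ^ e * s = p ^ e * (p ^ (γ - e) * k) := by
    rw [h, ← mul_assoc, ← pow_add]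
    congr 2
    omega
  exact Nat.eq_of_mul_eq_mul_left (pow_pos hp.pos e) h4

lemma schemmel_dvd (r : ℕ) {p y : ℕ} (hp : p.Prime) (hpy : p ∣ y) (hy : y ≠ 0)
    (hs : schemmel r y ≠ 0) :
    r < p ∧ (p - r) ∣ schemmel r y ∧ (2 ≤ y.factorization p → p ∣ schemmel r y) := by
  have ha : y.factorization p ≠ 0 := (hp.factorization_pos_of_dvd hy hpy).ne'
  have hd := schemmel_ord r hp hy
  rw [schemmel_prime_pow r hp ha] at hd
  have hrp : ¬ p ≤ r := by
    intro hle
    rw [if_pos hle] at hd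
    simp at hd
    exact hs hd
  rw [if_neg hrp] at hd
  refine ⟨not_le.mp hrp, ⟨p ^ (y.factorization p - 1) * schemmel r (ordCompl[p] y), by rw [hd]; ring⟩, ?_⟩
  intro h2
  refine ⟨p ^ (y.factorization p - 2) * (p - r) * schemmel r (ordCompl[p] y), ?_⟩
  rw [hd, ← mul_assoc, ← mul_assoc]
  congr 2
  rw [← pow_succ']
  congr 1
  omega

lemma schemmel_strip (r : ℕ) (hr : (r + 1).Prime) {x k α : ℕ} (hx : 0 < x)
    (hnd : ¬ (r + 1) ∣ k) (hs : schemmel r x = (r + 1) ^ α * k) :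
    ∃ y γ, 0 < y ∧ ¬ (r + 1) ∣ y ∧ schemmel r y = (r + 1) ^ γ * k := by
  set p := r + 1 with hpdef
  refine ⟨ordCompl[p] x, α - (x.factorization p - 1), Nat.ordCompl_pos p hx.ne', Nat.not_dvd_ordCompl hr hx.ne', ?_⟩
  have hd := schemmel_ord r hr hx.ne'
  rcases Nat.eq_zero_or_pos (x.factorization p) with h0 | h1
  · rw [h0] at hd ⊢
    simp only [pow_zero, Nat.div_one, schemmel_one, one_mul] at hd ⊢
    simpa using hs
  · rw [schemmel_prime_pow r hr h1.ne'] at hd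
    have : ¬ p ≤ r := by omega
    rw [if_neg this] at hd
    have hp1 : p - r = 1 := by omega
    rw [hp1, mul_one] at hd
    rw [hs] at hd
    exact schemmel_cancel hr hnd hd.symm
lemma schemmel_merge (r : ℕ) (hr : (r + 1).Prime) :
    ∀ N : ℕ, ∀ y₁ y₂ k₁ k₂ γ₁ γ₂ : ℕ, y₁ + y₂ ≤ N →
      0 < y₁ → 0 < y₂ → ¬ (r + 1) ∣ y₁ → ¬ (r + 1) ∣ y₂ →
      0 < k₁ → 0 < k₂ → ¬ (r + 1) ∣ k₁ → ¬ (r + 1) ∣ k₂ → Nat.Coprime k₁ k₂ →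
      schemmel r y₁ = (r + 1) ^ γ₁ * k₁ → schemmel r y₂ = (r + 1) ^ γ₂ * k₂ →
      ∃ z γ, 0 < z ∧ schemmel r z = (r + 1) ^ γ * (k₁ * k₂) := by
  intro N
  induction N using Nat.strong_induction_on with
  | _ N ih =>
  intro y₁ y₂ k₁ k₂ γ₁ γ₂ hN h1 h2 hd1 hd2 hk1 hk2 hnd1 hnd2 hcop hs1 hs2
  by_cases hc : Nat.Coprime y₁ y₂
  · exact ⟨y₁ * y₂, γ₁ + γ₂, Nat.mul_pos h1 h2, by
      rw [schemmel_mul r h1.ne' h2.ne' hc, hs1, hs2, pow_add]; ring⟩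
  · obtain ⟨p, hp, hpg⟩ := Nat.exists_prime_and_dvd hc
    have hpy1 : p ∣ y₁ := hpg.trans (Nat.gcd_dvd_left _ _)
    have hpy2 : p ∣ y₂ := hpg.trans (Nat.gcd_dvd_right _ _)
    have hpne : p ≠ r + 1 := fun he => hd1 (he ▸ hpy1)
    have hs1ne : schemmel r y₁ ≠ 0 := by rw [hs1]; positivity
    have hs2ne : schemmel r y₂ ≠ 0 := by rw [hs2]; positivity
    obtain ⟨hrp, hdvd1, h2dvd1⟩ := schemmel_dvd r hp hpy1 h1.ne' hs1ne
    obtain ⟨-, hdvd2, h2dvd2⟩ := schemmel_dvd r hp hpy2 h2.ne' hs2ne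
    -- a prime dividing both schemmel values that is not r+1 divides both k's: impossible
    have hkey : ∀ q : ℕ, q.Prime → q ∣ schemmel r y₁ → q ∣ schemmel r y₂ → q = r + 1 := by
      intro q hq hq1 hq2
      by_contra hqne
      have hqk1 : q ∣ k₁ := by
        rw [hs1] at hq1
        rcases hq.dvd_mul.mp hq1 with h | h
        · exact absurd ((Nat.prime_dvd_prime_iff_eq hq hr).mp (hq.dvd_of_dvd_pow h)) hqne
        · exact h
      have hqk2 : q ∣ k₂ := by
        rw [hs2] at hq2
        rcases hq.dvd_mul.mp hq2 with h | h
        · exact absurd ((Nat.prime_dvd_prime_iff_eq hq hr).mp (hq.dvd_of_dvd_pow h)) hqne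
        · exact h
      have : q ∣ 1 := hcop ▸ Nat.dvd_gcd hqk1 hqk2
      exact hq.ne_one (Nat.dvd_one.mp this)
    -- p - r is a power of r + 1
    have hcopk1 : Nat.Coprime (p - r) k₁ := by
      by_contra hcc
      obtain ⟨q, hq, hqg⟩ := Nat.exists_prime_and_dvd hcc
      have hq1 : q ∣ schemmel r y₁ := by
        rw [hs1]
        exact Dvd.dvd.mul_left ((hqg.trans (Nat.gcd_dvd_right _ _))) _
      have hq2 : q ∣ schemmel r y₂ := (hqg.trans (Nat.gcd_dvd_left _ _)).trans hdvd2
      have := hkey q hq hq1 hq2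
      exact hnd1 (this ▸ (hqg.trans (Nat.gcd_dvd_right _ _)))
    obtain ⟨e, -, hpe⟩ := (Nat.dvd_prime_pow hr).mp
      (hcopk1.dvd_of_dvd_mul_right (hs1 ▸ hdvd1))
    -- not both exponents ≥ 2
    set a := y₁.factorization p with hadef
    set b := y₂.factorization p with hbdef
    have ha1 : 1 ≤ a := hp.factorization_pos_of_dvd h1.ne' hpy1
    have hb1 : 1 ≤ b := hp.factorization_pos_of_dvd h2.ne' hpy2
    have hnot : ¬ (2 ≤ a ∧ 2 ≤ b) := by
      rintro ⟨ha2, hb2⟩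
      exact hpne (hkey p hp (h2dvd1 ha2) (h2dvd2 hb2))
    -- generic stripping
    have strip : ∀ y k γ : ℕ, 0 < y → ¬ (r + 1) ∣ y → ¬ (r + 1) ∣ k →
        y.factorization p = 1 → schemmel r y = (r + 1) ^ γ * k →
        ∃ m, 0 < m ∧ m < y ∧ ¬ (r + 1) ∣ m ∧
          schemmel r m = (r + 1) ^ (γ - e) * k := by
      intro y k γ hy hdy hdk hfac hsy
      refine ⟨ordCompl[p] y, Nat.ordCompl_pos p hy.ne', ?_,
        fun hcc => hdy (hcc.trans (Nat.ordCompl_dvd y p)), ?_⟩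
      · rw [hfac, pow_one]
        exact Nat.div_lt_self hy hp.one_lt
      · have hdd := schemmel_ord r hp hy.ne'
        rw [hfac] at hdd ⊢
        rw [schemmel_prime_pow r hp one_ne_zero, if_neg (not_le.mpr hrp)] at hdd
        simp only [Nat.sub_self, pow_zero, one_mul, pow_one] at hdd ⊢
        rw [hsy, hpe] at hdd
        exact schemmel_cancel hr hdk hdd.symm
    rcases (by omega : a = 1 ∨ b = 1) with hcase | hcase
    · obtain ⟨m, hm0, hmlt, hmd, hms⟩ := strip y₁ k₁ γ₁ h1 hd1 hnd1 hcase hs1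
      obtain ⟨z, γ, hz, hzs⟩ := ih (m + y₂) (by omega) m y₂ k₁ k₂ (γ₁ - e) γ₂ le_rfl
        hm0 h2 hmd hd2 hk1 hk2 hnd1 hnd2 hcop hms hs2
      exact ⟨z, γ, hz, hzs⟩
    · obtain ⟨m, hm0, hmlt, hmd, hms⟩ := strip y₂ k₂ γ₂ h2 hd2 hnd2 hcase hs2
      obtain ⟨z, γ, hz, hzs⟩ := ih (y₁ + m) (by omega) y₁ m k₁ k₂ γ₁ (γ₂ - e) le_rfl
        h1 hm0 hd1 hmd hk1 hk2 hnd1 hnd2 hcop hs1 hms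
      exact ⟨z, γ, hz, hzs⟩

theorem nontotient_factor_of_coprime_split (r k k₁ k₂ : ℕ) (hr : (r + 1).Prime)
    (hk : 0 < k) (hnd : ¬ (r + 1) ∣ k)
    (h : ∀ α : ℕ, ¬ ∃ x : ℕ, 0 < x ∧ schemmel r x = (r + 1) ^ α * k)
    (hk₁ : 0 < k₁) (hk₂ : 0 < k₂) (hcop : Nat.Coprime k₁ k₂) (hmul : k₁ * k₂ = k) :
    (∀ α : ℕ, ¬ ∃ x : ℕ, 0 < x ∧ schemmel r x = (r + 1) ^ α * k₁) ∨
    (∀ α : ℕ, ¬ ∃ x : ℕ, 0 < x ∧ schemmel r x = (r + 1) ^ α * k₂) := by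
  by_contra hcon
  push_neg at hcon
  obtain ⟨⟨α₁, x₁, hx₁, hs₁⟩, ⟨α₂, x₂, hx₂, hs₂⟩⟩ := hcon
  have hnd₁ : ¬ (r + 1) ∣ k₁ := fun hd => hnd (hmul ▸ hd.mul_right k₂)
  have hnd₂ : ¬ (r + 1) ∣ k₂ := fun hd => hnd (hmul ▸ hd.mul_left k₁)
  obtain ⟨y₁, γ₁, hy₁, hyd₁, hys₁⟩ := schemmel_strip r hr hx₁ hnd₁ hs₁
  obtain ⟨y₂, γ₂, hy₂, hyd₂, hys₂⟩ := schemmel_strip r hr hx₂ hnd₂ hs₂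
  obtain ⟨z, γ, hz, hzs⟩ := schemmel_merge r hr (y₁ + y₂) y₁ y₂ k₁ k₂ γ₁ γ₂ le_rfl
    hy₁ hy₂ hyd₁ hyd₂ hk₁ hk₂ hnd₁ hnd₂ hcop hys₁ hys₂
  exact h γ ⟨z, hz, by rw [hzs, hmul]⟩
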